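/- For x, y ∈ ℝ^d, if every integer vector b with b·x ∈ ℤ also satisfies b·y ∈ ℤ, then for every ε > 0 there exist infinitely many n ∈ ℕ such that the sum over j of the distances from n·x_j − y_j to the nearest integer is less than ε. -/

import Mathlib

namespace KroneckerAux

open Finset Complex

noncomputable def Complex.abs : AbsoluteValue ℂ ℝ where
  toFun z := ‖z‖
  map_mul' := norm_mul
  nonneg' := norm_nonneg
  eq_zero' _ := norm_eq_zero
  add_le' := norm_add_le

lemma Complex.norm_eq_abs (z : ℂ) : ‖z‖ = Complex.abs z := rfl

lemma Complex.abs_exp_ofReal_mul_I (x : ℝ) : Complex.abs (Complex.exp (x * Complex.I)) = 1 :=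
  Complex.norm_exp_ofReal_mul_I x

noncomputable def ee (t : ℝ) : ℂ := Complex.exp (2 * Real.pi * t * Complex.I)

lemma ee_add (s t : ℝ) : ee (s + t) = ee s * ee t := by
  rw [ee, ee, ee, ← Complex.exp_add]; congr 1; push_cast; ring

lemma ee_zero : ee 0 = 1 := by simp [ee]

lemma ee_abs (t : ℝ) : Complex.abs (ee t) = 1 := by
  have : ee t = Complex.exp ((2 * Real.pi * t : ℝ) * Complex.I) := by
    rw [ee]; push_cast; ring_nf
  rw [this, Complex.abs_exp_ofReal_mul_I]

lemma ee_int (m : ℤ) : ee m = 1 := by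
  rw [ee, Complex.exp_eq_one_iff]; exact ⟨m, by push_cast; ring⟩

lemma ee_eq_one_iff (t : ℝ) : ee t = 1 ↔ ∃ m : ℤ, t = (m : ℝ) := by
  constructor
  · rw [ee, Complex.exp_eq_one_iff]
    rintro ⟨n, hn⟩
    refine ⟨n, ?_⟩
    have h2 : (2 * (Real.pi : ℂ) * Complex.I) ≠ 0 := by
      simp [Real.pi_ne_zero, Complex.I_ne_zero, Complex.ofReal_ne_zero]
    have h' : (2 * (Real.pi : ℂ) * Complex.I) * t = (2 * (Real.pi : ℂ) * Complex.I) * n := by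
      linear_combination hn
    have := mul_left_cancel₀ h2 h'
    exact_mod_cast this
  · rintro ⟨m, rfl⟩; exact ee_int m

lemma ee_nat_mul (n : ℕ) (t : ℝ) : ee ((n : ℝ) * t) = ee t ^ n := by
  rw [ee, ee, ← Complex.exp_nat_mul]; congr 1; push_cast; ring

lemma ee_conj (t : ℝ) : (starRingEnd ℂ) (ee t) = ee (-t) := by
  rw [ee, ee, ← Complex.exp_conj]; congr 1
  push_cast
  simp only [map_mul, Complex.conj_I, Complex.conj_ofReal, map_ofNat]
  ring

lemma ee_sum {ι : Type*} (s : Finset ι) (f : ι → ℝ) :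
    ee (∑ i ∈ s, f i) = ∏ i ∈ s, ee (f i) := by
  induction s using Finset.cons_induction with
  | empty => simp [ee_zero]
  | cons a s ha ih => rw [Finset.sum_cons, Finset.prod_cons, ee_add, ih]

lemma ee_cos_sin (t : ℝ) :
    ee t = (Real.cos (2 * Real.pi * t) : ℂ) + (Real.sin (2 * Real.pi * t) : ℂ) * Complex.I := by
  have : ee t = Complex.exp ((2 * Real.pi * t : ℝ) * Complex.I) := by
    rw [ee]; push_cast; ring_nf
  rw [this, Complex.exp_mul_I, Complex.ofReal_cos, Complex.ofReal_sin]

/-- Uniform bound for geometric sums of a unimodular `z ≠ 1`. -/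
lemma geom_bound {z : ℂ} (hz : z ≠ 1) (hza : Complex.abs z = 1) (M N : ℕ) :
    Complex.abs (∑ n ∈ Finset.Ico M (M + N), z ^ n) ≤ 2 / Complex.abs (z - 1) := by
  rw [geom_sum_Ico hz (Nat.le_add_right M N), map_div₀]
  have h1 : Complex.abs (z ^ (M + N) - z ^ M) ≤ 2 := by
    calc Complex.abs (z ^ (M + N) - z ^ M)
        ≤ Complex.abs (z ^ (M + N) - 0) + Complex.abs (0 - z ^ M) :=
          Complex.abs.sub_le _ 0 _
      _ = Complex.abs (z ^ (M + N)) + Complex.abs (z ^ M) := by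
          rw [sub_zero, zero_sub, map_neg_eq_map]
      _ = 2 := by rw [map_pow, map_pow, hza]; norm_num
  have h2 : 0 < Complex.abs (z - 1) := by
    rw [AbsoluteValue.pos_iff]; exact sub_ne_zero.mpr hz
  gcongr

/-- From `|1 + ee θ| ≥ 2 - δ` deduce nearest-integer distance bound. -/
lemma near_int_of_abs {θ δ : ℝ} (hδ0 : 0 < δ) (hδ1 : δ < 1)
    (hab : 2 - δ ≤ Complex.abs (1 + ee θ)) :
    |θ - round θ| ≤ Real.sqrt δ / 2 := by
  set α := 2 * Real.pi * θ with hα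
  have hcos : 1 - 2 * δ ≤ Real.cos α := by
    have hsq : (2 - δ) ^ 2 ≤ (Complex.abs (1 + ee θ)) ^ 2 := by
      apply pow_le_pow_left₀ (by linarith) hab
    rw [← Complex.norm_eq_abs, Complex.sq_norm, ee_cos_sin] at hsq
    have : Complex.normSq (1 + ((Real.cos α : ℂ) + (Real.sin α : ℂ) * Complex.I))
        = (1 + Real.cos α) ^ 2 + Real.sin α ^ 2 := by
      have : (1 : ℂ) + ((Real.cos α : ℂ) + (Real.sin α : ℂ) * Complex.I)
          = ((1 + Real.cos α : ℝ) : ℂ) + ((Real.sin α : ℝ) : ℂ) * Complex.I := by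
        push_cast; ring
      rw [this, Complex.normSq_add_mul_I]
    rw [this] at hsq
    have hpy := Real.sin_sq_add_cos_sq α
    nlinarith
  set m := round θ with hm
  set t := θ - m with ht
  have htabs : |t| ≤ 1 / 2 := abs_sub_round θ
  have hct : Real.cos α = Real.cos (2 * Real.pi * t) := by
    have : α = 2 * Real.pi * t + m * (2 * Real.pi) := by rw [ht]; ring
    rw [this, Real.cos_add_int_mul_two_pi]
  -- 1 - cos(2π t) ≥ 8 t²
  have key : 8 * t ^ 2 ≤ 1 - Real.cos (2 * Real.pi * t) := by
    have habs : Real.cos (2 * Real.pi * t) = Real.cos (2 * Real.pi * |t|) := by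
      rcases abs_cases t with ⟨h1, _⟩ | ⟨h1, _⟩
      · rw [h1]
      · rw [h1]; rw [show 2 * Real.pi * -t = -(2 * Real.pi * t) by ring, Real.cos_neg]
    rw [habs]
    have hs : Real.cos (2 * Real.pi * |t|) = 1 - 2 * Real.sin (Real.pi * |t|) ^ 2 := by
      rw [show 2 * Real.pi * |t| = 2 * (Real.pi * |t|) by ring, Real.cos_two_mul']
      have := Real.sin_sq_add_cos_sq (Real.pi * |t|)
      nlinarith
    rw [hs]
    have hjordan : 2 / Real.pi * (Real.pi * |t|) ≤ Real.sin (Real.pi * |t|) := by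
      apply Real.mul_le_sin (by positivity)
      have : Real.pi * |t| ≤ Real.pi * (1 / 2) := by
        apply mul_le_mul_of_nonneg_left htabs Real.pi_pos.le
      linarith
    have hπ : 2 / Real.pi * (Real.pi * |t|) = 2 * |t| := by
      field_simp
    rw [hπ] at hjordan
    have h2t : (2 * |t|) ^ 2 ≤ Real.sin (Real.pi * |t|) ^ 2 := by
      apply pow_le_pow_left₀ (by positivity) hjordan
    have : (2 * |t|) ^ 2 = 4 * t ^ 2 := by rw [mul_pow, _root_.sq_abs]; norm_num
    nlinarith
  rw [hct] at hcos
  have ht2 : t ^ 2 ≤ δ / 4 := by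
    have h8 : 8 * t ^ 2 ≤ 2 * δ := key.trans (by linarith)
    clear_value t m
    linarith
  have : |t| = Real.sqrt (t ^ 2) := (Real.sqrt_sq_eq_abs t).symm
  rw [this]
  have h4 : Real.sqrt (t ^ 2) ≤ Real.sqrt (δ / 4) := Real.sqrt_le_sqrt ht2
  have h5 : Real.sqrt (δ / 4) ≤ Real.sqrt δ / 2 := by
    nlinarith [Real.sq_sqrt hδ0.le, Real.sq_sqrt (show (0:ℝ) ≤ δ / 4 by linarith),
      Real.sqrt_nonneg δ, Real.sqrt_nonneg (δ / 4),
      sq_nonneg (Real.sqrt δ - 2 * Real.sqrt (δ / 4))]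
  linarith

lemma exists_large (d : ℕ) (x y : Fin d → ℝ)
    (h : ∀ b : Fin d → ℤ, (∃ m : ℤ, ∑ j, (b j : ℝ) * x j = (m : ℝ)) →
      ∃ m : ℤ, ∑ j, (b j : ℝ) * y j = (m : ℝ))
    (δ : ℝ) (hδ0 : 0 < δ) (hδ1 : δ < 1) (M : ℕ) :
    ∃ n : ℕ, M < n ∧ (d : ℝ) + 1 - δ <
      Complex.abs (∑ o : Option (Fin d), ee ((n : ℝ) * (o.elim 0 x) - o.elim 0 y)) := by
  set F : ℕ → ℂ := fun n => ∑ o : Option (Fin d), ee ((n : ℝ) * (o.elim 0 x) - o.elim 0 y)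
    with hF
  by_contra Hcon
  push_neg at Hcon
  -- Hcon : ∀ n, M < n → abs (F n) ≤ d + 1 - δ
  have hd1 : (0 : ℝ) < (d : ℝ) + 1 - δ := by
    have : (0:ℝ) ≤ (d : ℝ) := Nat.cast_nonneg d
    linarith
  have hd2 : (0 : ℝ) < (d : ℝ) + 1 := by positivity
  set r : ℝ := (((d : ℝ) + 1 - δ) / ((d : ℝ) + 1)) ^ 2 with hr
  have hr0 : 0 < r := by positivity
  have hr1 : r < 1 := by
    have h1 : ((d : ℝ) + 1 - δ) / ((d : ℝ) + 1) < 1 := (div_lt_one hd2).mpr (by linarith)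
    have h0 : 0 ≤ ((d : ℝ) + 1 - δ) / ((d : ℝ) + 1) := by positivity
    calc r = (((d : ℝ) + 1 - δ) / ((d : ℝ) + 1)) ^ 2 := hr
      _ < 1 ^ 2 := by apply pow_lt_pow_left₀ h1 h0; norm_num
      _ = 1 := one_pow 2
  -- choose k
  obtain ⟨K, hK1, hK2⟩ :=
    (((tendsto_pow_const_mul_const_pow_of_lt_one d hr0.le hr1).eventually
      (gt_mem_nhds hr0)).and (Filter.eventually_ge_atTop 1)).exists
  obtain ⟨k, rfl⟩ : ∃ k, K = k + 1 := ⟨K - 1, by omega⟩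
  have hkey : ((k : ℝ) + 1) ^ d * ((d : ℝ) + 1 - δ) ^ (2 * k) < ((d : ℝ) + 1) ^ (2 * k) := by
    have h1 : ((k : ℝ) + 1) ^ d * r ^ (k + 1) < r := by push_cast at hK1 ⊢; exact hK1
    have h2 : ((k : ℝ) + 1) ^ d * r ^ k < 1 := by
      rw [pow_succ, ← mul_assoc] at h1
      exact (mul_lt_mul_iff_left₀ hr0).mp (by rw [one_mul]; exact h1)
    have h3 : r ^ k = ((d : ℝ) + 1 - δ) ^ (2 * k) / ((d : ℝ) + 1) ^ (2 * k) := by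
      rw [hr, ← pow_mul, div_pow]
    rw [h3] at h2
    have h4 : (0 : ℝ) < ((d : ℝ) + 1) ^ (2 * k) := by positivity
    rw [mul_div_assoc', div_lt_one h4] at h2
    linarith [h2]
  clear hK1 hK2
  -- set up tuple combinatorics
  set Xs : (Fin k → Option (Fin d)) → ℝ := fun g => ∑ i, (g i).elim 0 x with hXs
  set Ys : (Fin k → Option (Fin d)) → ℝ := fun g => ∑ i, (g i).elim 0 y with hYs
  set cnt : (Fin k → Option (Fin d)) → (Fin d → ℕ) :=
    fun g j => #{i | g i = some j} with hcnt
  have hsum_gen : ∀ (v : Fin d → ℝ) (g : Fin k → Option (Fin d)),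
      (∑ i, (g i).elim 0 v) = ∑ j, (cnt g j : ℝ) * v j := by
    intro v g
    rw [← Finset.sum_fiberwise univ g (fun i => (g i).elim 0 v)]
    rw [Fintype.sum_option]
    have hnone : ∑ i ∈ univ.filter (fun i => g i = none), (g i).elim 0 v = 0 := by
      apply Finset.sum_eq_zero
      intro i hi
      rw [mem_filter] at hi
      rw [hi.2]
      rfl
    rw [hnone, zero_add]
    apply Finset.sum_congr rfl
    intro j _
    have : ∑ i ∈ univ.filter (fun i => g i = some j), (g i).elim 0 v
        = ∑ _i ∈ univ.filter (fun i => g i = some j), v j := by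
      apply Finset.sum_congr rfl
      intro i hi
      rw [mem_filter] at hi
      rw [hi.2]
      rfl
    rw [this, Finset.sum_const, nsmul_eq_mul, hcnt]
  -- expansion of F n ^ k
  have hexp : ∀ n : ℕ, F n ^ k = ∑ g : Fin k → Option (Fin d), ee ((n : ℝ) * Xs g - Ys g) := by
    intro n
    have h1 : F n ^ k = ∏ _i : Fin k, F n := by
      rw [Finset.prod_const, Finset.card_univ, Fintype.card_fin]
    rw [h1, hF]
    rw [Finset.prod_univ_sum]
    rw [Fintype.piFinset_univ]
    apply Finset.sum_congr rfl
    intro g _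
    rw [← ee_sum]
    congr 1
    rw [hXs, hYs]
    simp only
    rw [Finset.mul_sum, ← Finset.sum_sub_distrib]
  -- conjugate expansion
  have hexpc : ∀ n : ℕ, (starRingEnd ℂ) (F n ^ k)
      = ∑ g : Fin k → Option (Fin d), ee (-((n : ℝ) * Xs g - Ys g)) := by
    intro n
    rw [hexp n, map_sum]
    exact Finset.sum_congr rfl fun g _ => ee_conj _
  -- bounded count function
  have hcntlt : ∀ (g : Fin k → Option (Fin d)) (j : Fin d), cnt g j < k + 1 := by
    intro g j
    apply Nat.lt_succ_of_le
    calc cnt g j ≤ #(univ : Finset (Fin k)) := Finset.card_filter_le _ _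
      _ = k := by rw [Finset.card_univ, Fintype.card_fin]
  set cntb : (Fin k → Option (Fin d)) → (Fin d → Fin (k + 1)) :=
    fun g j => ⟨cnt g j, hcntlt g j⟩ with hcntb
  have hcnt_iff : ∀ g g', cntb g = cntb g' → cnt g = cnt g' := by
    intro g g' he
    funext j
    exact congrArg Fin.val (congrFun he j)
  set w : (Fin d → Fin (k + 1)) → ℝ :=
    fun b => (#{g : Fin k → Option (Fin d) | cntb g = b} : ℝ) with hw
  have hw_total : ∑ b, w b = ((d : ℝ) + 1) ^ k := by
    calc ∑ b, w b = ∑ b, ∑ _g ∈ {g : Fin k → Option (Fin d) | cntb g = b}, (1 : ℝ) := by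
          apply Finset.sum_congr rfl; intro b _
          simp only [hw]; rw [Finset.sum_const, nsmul_eq_mul, mul_one]
      _ = ∑ _g : Fin k → Option (Fin d), (1 : ℝ) := Finset.sum_fiberwise _ _ _
      _ = ((d : ℝ) + 1) ^ k := by
          simp only [Finset.sum_const, Finset.card_univ, Fintype.card_fun, Fintype.card_option,
            Fintype.card_fin, nsmul_eq_mul, mul_one]
          push_cast; ring
  set Dr : ℝ := ∑ g : Fin k → Option (Fin d), ∑ g' : Fin k → Option (Fin d),
      (if cntb g' = cntb g then (1 : ℝ) else 0) with hDr
  have hDr_eq : Dr = ∑ b, w b ^ 2 := by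
    have hinner : ∀ g : Fin k → Option (Fin d),
        (∑ g' : Fin k → Option (Fin d), if cntb g' = cntb g then (1 : ℝ) else 0)
          = w (cntb g) := by
      intro g
      rw [Finset.sum_boole]
    calc Dr = ∑ g : Fin k → Option (Fin d), w (cntb g) := by
          rw [hDr]; exact Finset.sum_congr rfl fun g _ => hinner g
      _ = ∑ b, ∑ g ∈ {g : Fin k → Option (Fin d) | cntb g = b}, w (cntb g) :=
          (Finset.sum_fiberwise _ _ _).symm
      _ = ∑ b, w b ^ 2 := by
          apply Finset.sum_congr rfl; intro b _
          have : ∑ g ∈ {g : Fin k → Option (Fin d) | cntb g = b}, w (cntb g)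
              = ∑ _g ∈ {g : Fin k → Option (Fin d) | cntb g = b}, w b := by
            apply Finset.sum_congr rfl; intro g hg
            rw [(Finset.mem_filter.mp hg).2]
          rw [this, Finset.sum_const, nsmul_eq_mul, sq]
  have hDr_gt : ((d : ℝ) + 1 - δ) ^ (2 * k) < Dr := by
    have hcs : (∑ b, w b) ^ 2 ≤ (#(univ : Finset (Fin d → Fin (k + 1))) : ℝ) * ∑ b, w b ^ 2 :=
      sq_sum_le_card_mul_sum_sq
    rw [hw_total, ← hDr_eq] at hcs
    have hcard : (#(univ : Finset (Fin d → Fin (k + 1))) : ℝ) = ((k : ℝ) + 1) ^ d := by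
      simp only [Finset.card_univ, Fintype.card_fun, Fintype.card_fin]
      push_cast; ring
    rw [hcard] at hcs
    have hpow : (((d : ℝ) + 1) ^ k) ^ 2 = ((d : ℝ) + 1) ^ (2 * k) := by
      rw [← pow_mul, mul_comm]
    rw [hpow] at hcs
    have hP : (0 : ℝ) < ((k : ℝ) + 1) ^ d := by positivity
    have := lt_of_le_of_lt' hcs hkey  -- (k+1)^d * A < (k+1)^d * Dr
    exact lt_of_mul_lt_mul_left this hP.le
  -- constants
  set θf : (Fin k → Option (Fin d)) → (Fin k → Option (Fin d)) → ℝ :=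
    fun g g' => Xs g - Xs g' with hθf
  set cf : (Fin k → Option (Fin d)) → (Fin k → Option (Fin d)) → ℝ :=
    fun g g' => Ys g' - Ys g with hcf
  set Cb : (Fin k → Option (Fin d)) → (Fin k → Option (Fin d)) → ℝ :=
    fun g g' => if ee (θf g g') = 1 then 0 else 2 / Complex.abs (ee (θf g g') - 1) with hCb
  have hCb0 : ∀ g g', 0 ≤ Cb g g' := by
    intro g g'
    simp only [hCb]
    split_ifs
    · exact le_refl 0
    · positivity
  set Ctot : ℝ := ∑ g : Fin k → Option (Fin d), ∑ g' : Fin k → Option (Fin d), Cb g g'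
    with hCtot
  set A : ℝ := ((d : ℝ) + 1 - δ) ^ (2 * k) with hA
  obtain ⟨N, hN⟩ := exists_nat_gt (Ctot / (Dr - A))
  have hDrA : 0 < Dr - A := by rw [hA]; linarith [hDr_gt]
  have hN' : Ctot < (N : ℝ) * (Dr - A) := (div_lt_iff₀ hDrA).mp hN
  set I := Finset.Ico (M + 1) (M + 1 + N) with hI
  have hcardI : #I = N := by rw [hI, Nat.card_Ico]; omega
  set T : (Fin k → Option (Fin d)) → (Fin k → Option (Fin d)) → ℂ :=
    fun g g' => ee (cf g g') * ∑ n ∈ I, (ee (θf g g')) ^ n with hT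
  set S : ℝ := ∑ n ∈ I, (Complex.abs (F n)) ^ (2 * k) with hS
  -- the key identity
  have habs_pow : ∀ z : ℂ, ((Complex.abs z : ℂ)) ^ (2 * k) = z ^ k * (starRingEnd ℂ) (z ^ k) := by
    intro z
    rw [map_pow, ← mul_pow, Complex.mul_conj, ← Complex.norm_eq_abs, Complex.normSq_eq_norm_sq, Complex.ofReal_pow,
      ← pow_mul]
  have hSC : (S : ℂ) = ∑ g : Fin k → Option (Fin d), ∑ g' : Fin k → Option (Fin d), T g g' := by
    rw [hS]
    push_cast
    calc ∑ n ∈ I, ((Complex.abs (F n) : ℂ)) ^ (2 * k)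
        = ∑ n ∈ I, ∑ g : Fin k → Option (Fin d), ∑ g' : Fin k → Option (Fin d),
            ee (cf g g') * (ee (θf g g')) ^ n := by
          apply Finset.sum_congr rfl; intro n _
          rw [habs_pow, hexpc n, hexp n, Finset.sum_mul_sum]
          apply Finset.sum_congr rfl; intro g _
          apply Finset.sum_congr rfl; intro g' _
          rw [← ee_add]
          have harg : (n : ℝ) * Xs g - Ys g + -((n : ℝ) * Xs g' - Ys g')
              = (n : ℝ) * θf g g' + cf g g' := by
            simp only [hθf, hcf]; ring
          rw [harg, ee_add, ee_nat_mul, mul_comm]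
      _ = ∑ g : Fin k → Option (Fin d), ∑ g' : Fin k → Option (Fin d), T g g' := by
          rw [Finset.sum_comm]
          apply Finset.sum_congr rfl; intro g _
          rw [Finset.sum_comm]
          apply Finset.sum_congr rfl; intro g' _
          simp only [hT]; rw [Finset.mul_sum]
  -- per-pair lower bound on real parts
  have hbound : ∀ g g', (if cntb g' = cntb g then (N : ℝ) else 0) - Cb g g' ≤ (T g g').re := by
    intro g g'
    by_cases hone : ee (θf g g') = 1
    · have hc1 : ee (cf g g') = 1 := by
        obtain ⟨m, hm⟩ := (ee_eq_one_iff _).mp hone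
        set b : Fin d → ℤ := fun j => (cnt g j : ℤ) - (cnt g' j : ℤ) with hb
        have hxv : ∑ j, (b j : ℝ) * x j = θf g g' := by
          simp only [hθf, hXs]
          rw [hsum_gen x g, hsum_gen x g', ← Finset.sum_sub_distrib]
          apply Finset.sum_congr rfl; intro j _
          rw [hb]; push_cast; ring
        obtain ⟨m', hm'⟩ := h b ⟨m, by rw [hxv]; exact hm⟩
        have hyv : ∑ j, (b j : ℝ) * y j = Ys g - Ys g' := by
          simp only [hYs]
          rw [hsum_gen y g, hsum_gen y g', ← Finset.sum_sub_distrib]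
          apply Finset.sum_congr rfl; intro j _
          rw [hb]; push_cast; ring
        have : cf g g' = ((-m' : ℤ) : ℝ) := by
          simp only [hcf]; push_cast
          rw [hyv] at hm'
          linarith
        rw [this, ee_int]
      have hTval : T g g' = (N : ℂ) := by
        simp only [hT]; rw [hc1, hone, one_mul]
        simp [hcardI]
      rw [hTval]
      have hCbz : Cb g g' = 0 := by simp only [hCb]; rw [if_pos hone]
      rw [hCbz, sub_zero]
      split_ifs
      · simp
      · simp
    · have hne : ¬(cntb g' = cntb g) := by
        intro hcc
        apply hone
        have hceq : cnt g' = cnt g := hcnt_iff _ _ hcc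
        have : θf g g' = 0 := by
          simp only [hθf, hXs]
          rw [hsum_gen x g, hsum_gen x g', hceq, sub_self]
        rw [this, ee_zero]
      rw [if_neg hne, zero_sub]
      have hTabs : Complex.abs (T g g') ≤ Cb g g' := by
        simp only [hCb, hT]
        rw [if_neg hone, map_mul, ee_abs, one_mul, hI]
        exact geom_bound hone (ee_abs _) (M + 1) N
      have h1 : |(T g g').re| ≤ Cb g g' := (Complex.abs_re_le_norm _).trans hTabs
      linarith [(abs_le.mp h1).1]
  -- upper bound
  have hS_upper : S ≤ (N : ℝ) * A := by
    rw [hS]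
    calc ∑ n ∈ I, (Complex.abs (F n)) ^ (2 * k)
        ≤ ∑ _n ∈ I, A := by
          apply Finset.sum_le_sum
          intro n hn
          rw [hA]
          apply pow_le_pow_left₀ (AbsoluteValue.nonneg _ _)
          exact Hcon n (by rw [hI] at hn; exact (Finset.mem_Ico.mp hn).1)
      _ = (N : ℝ) * A := by rw [Finset.sum_const, hcardI, nsmul_eq_mul]
  -- lower bound
  have hS_lower : (N : ℝ) * Dr - Ctot ≤ S := by
    have h1 : S = ∑ g : Fin k → Option (Fin d), ∑ g' : Fin k → Option (Fin d), (T g g').re := by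
      have h2 := congrArg Complex.re hSC
      rw [Complex.ofReal_re] at h2
      rw [h2, Complex.re_sum]
      exact Finset.sum_congr rfl fun g _ => Complex.re_sum _ _
    rw [h1]
    have h3 : (N : ℝ) * Dr - Ctot
        = ∑ g : Fin k → Option (Fin d), ∑ g' : Fin k → Option (Fin d),
            ((if cntb g' = cntb g then (N : ℝ) else 0) - Cb g g') := by
      rw [hDr, hCtot, Finset.mul_sum, ← Finset.sum_sub_distrib]
      apply Finset.sum_congr rfl; intro g _
      rw [Finset.mul_sum, ← Finset.sum_sub_distrib]
      apply Finset.sum_congr rfl; intro g' _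
      rw [mul_ite, mul_one, mul_zero]
    rw [h3]
    apply Finset.sum_le_sum
    intro g _
    apply Finset.sum_le_sum
    intro g' _
    exact hbound g g'
  nlinarith [hN', hS_upper, hS_lower]

end KroneckerAux

open KroneckerAux in
open Finset in
/-- **Kronecker's theorem.** If every integer vector `b` with `b·x ∈ ℤ` also satisfies
`b·y ∈ ℤ`, then for every `ε > 0` there are infinitely many `n` with
`∑ⱼ [[n xⱼ - yⱼ]] < ε`, where `[[t]]` is the distance from `t` to the nearest integer. -/
theorem kronecker_simultaneous (d : ℕ) (x y : Fin d → ℝ)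
    (h : ∀ b : Fin d → ℤ, (∃ m : ℤ, ∑ j, (b j : ℝ) * x j = (m : ℝ)) →
      ∃ m : ℤ, ∑ j, (b j : ℝ) * y j = (m : ℝ)) :
    ∀ ε : ℝ, 0 < ε →
      {n : ℕ | ∑ j, |(n : ℝ) * x j - y j - round ((n : ℝ) * x j - y j)| < ε}.Infinite := by
  intro ε hε
  set δ : ℝ := min (1 / 2) ((ε / ((d : ℝ) + 1)) ^ 2) with hδ
  have hd1 : (0 : ℝ) < (d : ℝ) + 1 := by positivity
  have hδ0 : 0 < δ := by
    apply lt_min (by norm_num)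
    positivity
  have hδ1 : δ < 1 := (min_le_left _ _).trans_lt (by norm_num)
  have hsqrt : Real.sqrt δ ≤ ε / ((d : ℝ) + 1) := by
    have h1 : δ ≤ (ε / ((d : ℝ) + 1)) ^ 2 := min_le_right _ _
    calc Real.sqrt δ ≤ Real.sqrt ((ε / ((d : ℝ) + 1)) ^ 2) := Real.sqrt_le_sqrt h1
      _ = |ε / ((d : ℝ) + 1)| := Real.sqrt_sq_eq_abs _
      _ = ε / ((d : ℝ) + 1) := abs_of_pos (by positivity)
  apply Set.infinite_of_forall_exists_gt
  intro M
  obtain ⟨n, hn1, hn2⟩ := exists_large d x y h δ hδ0 hδ1 M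
  refine ⟨n, ?_, hn1⟩
  simp only [Set.mem_setOf_eq]
  have hcoord : ∀ j : Fin d, |(n : ℝ) * x j - y j - round ((n : ℝ) * x j - y j)|
      ≤ Real.sqrt δ / 2 := by
    intro j0
    apply near_int_of_abs hδ0 hδ1
    have hFsplit : (∑ o : Option (Fin d), ee ((n : ℝ) * (o.elim 0 x) - o.elim 0 y))
        = (1 + ee ((n : ℝ) * x j0 - y j0))
          + ∑ j ∈ univ.erase j0, ee ((n : ℝ) * x j - y j) := by
      rw [Fintype.sum_option]
      simp only [Option.elim_none, Option.elim_some]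
      rw [show (n : ℝ) * 0 - 0 = (0 : ℝ) by ring, ee_zero,
        ← Finset.add_sum_erase univ _ (Finset.mem_univ j0), ← add_assoc]
    rw [hFsplit] at hn2
    have htri : Complex.abs ((1 + ee ((n : ℝ) * x j0 - y j0))
          + ∑ j ∈ univ.erase j0, ee ((n : ℝ) * x j - y j))
        ≤ Complex.abs (1 + ee ((n : ℝ) * x j0 - y j0)) + ((d : ℝ) - 1) := by
      have h2 : Complex.abs (∑ j ∈ univ.erase j0, ee ((n : ℝ) * x j - y j))
          ≤ (d : ℝ) - 1 := by
        rw [← Complex.norm_eq_abs]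
        calc ‖∑ j ∈ univ.erase j0, ee ((n : ℝ) * x j - y j)‖
            ≤ ∑ j ∈ univ.erase j0, ‖ee ((n : ℝ) * x j - y j)‖ := norm_sum_le _ _
          _ = ∑ _j ∈ univ.erase j0, (1 : ℝ) := by
              apply Finset.sum_congr rfl
              intro j _
              rw [Complex.norm_eq_abs, ee_abs]
          _ = (d : ℝ) - 1 := by
              rw [Finset.sum_const, nsmul_eq_mul, mul_one,
                Finset.card_erase_of_mem (Finset.mem_univ j0), Finset.card_univ,
                Fintype.card_fin, Nat.cast_sub j0.pos, Nat.cast_one]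
      calc Complex.abs (_ + _) ≤ Complex.abs _ + Complex.abs _ := Complex.abs.add_le _ _
        _ ≤ _ := by linarith
    linarith [hn2.trans_le htri]
  calc ∑ j, |(n : ℝ) * x j - y j - round ((n : ℝ) * x j - y j)|
      ≤ ∑ _j : Fin d, Real.sqrt δ / 2 := Finset.sum_le_sum fun j _ => hcoord j
    _ = (d : ℝ) * (Real.sqrt δ / 2) := by rw [Finset.sum_const, Finset.card_univ,
          Fintype.card_fin, nsmul_eq_mul]
    _ ≤ (d : ℝ) * ((ε / ((d : ℝ) + 1)) / 2) := by
        apply mul_le_mul_of_nonneg_left _ (Nat.cast_nonneg d)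
        linarith
    _ < ε := by
        rw [div_div, mul_div_assoc']
        rw [div_lt_iff₀ (by positivity)]
        nlinarith [Nat.cast_nonneg (α := ℝ) d]
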